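/- For every d ∈ ℕ there exists a constant C_d with C_d ≤ binomial(2d−2, d−1) such that for all n ∈ ℕ and all homogeneous polynomials p of degree n in d variables, ‖p‖₂ ≤ |||p|||₁ ≤ √C_d · ‖p‖₂. -/

import Mathlib

noncomputable section
open scoped ComplexOrder
namespace WP

abbrev MvP (d : ℕ) := MvPolynomial (Fin d) ℂ

/-- The Cauchy pairing `⟨p,q⟩₂ = ∑_α a_α conj(b_α)` of coefficient vectors. -/
def pairing {d : ℕ} (p q : MvP d) : ℂ :=
  ∑ α ∈ p.support, p.coeff α * (starRingEnd ℂ) (q.coeff α)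

/-- The Hardy norm `‖p‖₂`: the `ℓ²` norm of the coefficient vector. -/
def norm2 {d : ℕ} (p : MvP d) : ℝ :=
  Real.sqrt (∑ α ∈ p.support, ‖p.coeff α‖ ^ 2)

/-- The weak product norm `‖p‖_{P_{d,k} ⊙ P_{d,l}}`. -/
def wpNorm (d k l : ℕ) (p : MvP d) : ℝ :=
  sInf {x : ℝ | ∃ (m : ℕ) (f g : Fin m → MvP d),
    (∀ j, (f j).IsHomogeneous k) ∧ (∀ j, (g j).IsHomogeneous l) ∧
    p = ∑ j, f j * g j ∧ x = ∑ j, norm2 (f j) * norm2 (g j)}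

/-- The weak product norm `‖p‖_{Z_d ⊙ P_{d,k} ⊙ P_{d,l}}`. -/
def zwpNorm (d k l : ℕ) (p : MvP d) : ℝ :=
  sInf {x : ℝ | ∃ f : Fin d → MvP d,
    (∀ i, (f i).IsHomogeneous (k + l)) ∧
    p = ∑ i, MvPolynomial.X i * f i ∧ x = ∑ i, wpNorm d k l (f i)}

/-- `|||p|||₁ = max_{0 ≤ k ≤ n} ‖p‖_{P_{d,k} ⊙ P_{d,n-k}}`. -/
def triple1 (d n : ℕ) (p : MvP d) : ℝ :=
  ⨆ k : Fin (n + 1), wpNorm d k (n - k) p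

/-- `|||p|||₂ = max_{0 ≤ k ≤ n-1} ‖p‖_{Z_d ⊙ P_{d,k} ⊙ P_{d,n-k-1}}`. -/
def triple2 (d n : ℕ) (p : MvP d) : ℝ :=
  ⨆ k : Fin n, zwpNorm d k (n - 1 - k) p


variable {d : ℕ}


lemma norm2_nonneg (p : MvP d) : 0 ≤ norm2 p := Real.sqrt_nonneg _

lemma sum_sq_superset (p : MvP d) {S : Finset (Fin d →₀ ℕ)} (hS : p.support ⊆ S) :
    ∑ α ∈ p.support, ‖p.coeff α‖ ^ 2 = ∑ α ∈ S, ‖p.coeff α‖ ^ 2 := by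
  refine Finset.sum_subset hS fun α _ hα => ?_
  rw [MvPolynomial.notMem_support_iff.mp hα]
  simp

lemma norm2_eq_sum {p : MvP d} {S : Finset (Fin d →₀ ℕ)} (hS : p.support ⊆ S) :
    norm2 p = Real.sqrt (∑ α ∈ S, ‖p.coeff α‖ ^ 2) := by
  rw [norm2, sum_sq_superset p hS]

lemma norm2_sq {p : MvP d} {S : Finset (Fin d →₀ ℕ)} (hS : p.support ⊆ S) :
    norm2 p ^ 2 = ∑ α ∈ S, ‖p.coeff α‖ ^ 2 := by
  rw [norm2_eq_sum hS, Real.sq_sqrt (Finset.sum_nonneg fun _ _ => by positivity)]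

lemma norm2_monomial (δ : Fin d →₀ ℕ) (c : ℂ) : norm2 (MvPolynomial.monomial δ c) = ‖c‖ := by
  rcases eq_or_ne c 0 with rfl | hc
  · simp [norm2]
  · rw [norm2_eq_sum (S := {δ}) (MvPolynomial.support_monomial_subset)]
    simp [MvPolynomial.coeff_monomial, Real.sqrt_sq_eq_abs]

lemma norm2_C_mul (c : ℂ) (p : MvP d) : norm2 (MvPolynomial.C c * p) = ‖c‖ * norm2 p := by
  have hsupp : (MvPolynomial.C c * p).support ⊆ p.support := by
    intro α hα
    rw [MvPolynomial.mem_support_iff] at hα ⊢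
    intro h; apply hα
    rw [MvPolynomial.coeff_C_mul, h, mul_zero]
  rw [norm2_eq_sum hsupp, norm2]
  have : ∀ α, ‖(MvPolynomial.C c * p).coeff α‖ ^ 2 = ‖c‖^2 * ‖p.coeff α‖^2 := by
    intro α; rw [MvPolynomial.coeff_C_mul]; simp [norm_mul, mul_pow]
  simp_rw [this, ← Finset.mul_sum]
  rw [Real.sqrt_mul (by positivity), Real.sqrt_sq (norm_nonneg _)]

lemma norm2_sum_le {m : ℕ} (f : Fin m → MvP d) :
    norm2 (∑ j, f j) ≤ ∑ j, norm2 (f j) := by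
  classical
  set S : Finset (Fin d →₀ ℕ) := Finset.univ.biUnion (fun j => (f j).support) with hS
  have hsub : ∀ j, (f j).support ⊆ S := fun j => by
    intro α hα; exact Finset.mem_biUnion.mpr ⟨j, Finset.mem_univ _, hα⟩
  have hsum : (∑ j, f j).support ⊆ S :=
    Finset.Subset.trans MvPolynomial.support_sum (fun α hα => hα)
  set v : Fin m → EuclideanSpace ℂ S := fun j => WithLp.toLp 2 (fun α => (f j).coeff α) with hv
  have hnv : ∀ j, ‖v j‖ = norm2 (f j) := by
    intro j
    rw [EuclideanSpace.norm_eq, norm2_eq_sum (hsub j)]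
    congr 1
    rw [← Finset.sum_coe_sort S (fun α => ‖(f j).coeff α‖^2)]
  have hk : ‖∑ j, v j‖ = norm2 (∑ j, f j) := by
    rw [EuclideanSpace.norm_eq, norm2_eq_sum hsum]
    congr 1
    rw [← Finset.sum_coe_sort S (fun α => ‖(∑ j, f j).coeff α‖^2)]
    apply Finset.sum_congr rfl
    intro α _
    congr 1
    rw [show (∑ j, v j) α = ∑ j, (f j).coeff α from by
      rw [WithLp.ofLp_sum, Finset.sum_apply]]
    rw [MvPolynomial.coeff_sum]
  calc norm2 (∑ j, f j) = ‖∑ j, v j‖ := hk.symm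
    _ ≤ ∑ j, ‖v j‖ := norm_sum_le _ _
    _ = ∑ j, norm2 (f j) := by simp_rw [hnv]


/-- take the first `m` units of `α` (canonical truncation to degree `m`). -/
def trunc (α : Fin d →₀ ℕ) (m : ℕ) : Fin d →₀ ℕ :=
  (Multiset.ofList (α.toMultiset.toList.take m)).toFinsupp

lemma degree_eq_card_toMultiset (α : Fin d →₀ ℕ) :
    α.degree = Multiset.card α.toMultiset := by
  rw [Finsupp.card_toMultiset, Finsupp.degree, Finsupp.sum]; rfl

lemma trunc_le (α : Fin d →₀ ℕ) (m : ℕ) : trunc α m ≤ α := by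
  classical
  rw [Finsupp.le_def]
  intro i
  have h1 : (trunc α m) i = (α.toMultiset.toList.take m).count i := by
    rw [trunc, Multiset.toFinsupp_apply, Multiset.coe_count]
  have h2 : α i = α.toMultiset.toList.count i := by
    rw [← Finsupp.count_toMultiset, ← Multiset.coe_count, Multiset.coe_toList]
  rw [h1, h2]
  exact List.Sublist.count_le i (List.take_sublist m _)

lemma degree_trunc (α : Fin d →₀ ℕ) (m : ℕ) (hm : m ≤ α.degree) :
    (trunc α m).degree = m := by
  rw [degree_eq_card_toMultiset, trunc, Multiset.toFinsupp_toMultiset, Multiset.coe_card,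
    List.length_take, Multiset.length_toList]
  rw [degree_eq_card_toMultiset] at hm
  omega

lemma degree_eq_sum_univ (α : Fin d →₀ ℕ) : α.degree = ∑ i, α i := by
  rw [Finsupp.degree]
  refine Finset.sum_subset (Finset.subset_univ _) ?_
  intro i _ hi
  exact Finsupp.notMem_support_iff.mp hi

lemma degree_add (a b : Fin d →₀ ℕ) : (a + b).degree = a.degree + b.degree := by
  simp only [degree_eq_sum_univ, Finsupp.add_apply, Finset.sum_add_distrib]

/-- the floor map `α ↦ ⌊2(d-1)α/n⌋`. -/
def floorMap (n : ℕ) (α : Fin d →₀ ℕ) : Fin d →₀ ℕ :=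
  α.mapRange (fun a => 2 * (d - 1) * a / n) (by simp)

/-- the ceiling map `ε ↦ ⌈εn/(2(d-1))⌉`. -/
def ceilMap (n : ℕ) (ε : Fin d →₀ ℕ) : Fin d →₀ ℕ :=
  ε.mapRange (fun a => (a * n + (2 * (d - 1)) - 1) / (2 * (d - 1))) (by
    rcases Nat.eq_zero_or_pos (2 * (d - 1)) with h | h
    · simp [h]
    · exact Nat.div_eq_of_lt (by omega))

lemma degree_floorMap_ge {n : ℕ} (hd : 2 ≤ d) (hn : 1 ≤ n) (α : Fin d →₀ ℕ)
    (hα : α.degree = n) : d - 1 ≤ (floorMap n α).degree := by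
  obtain ⟨e, rfl⟩ : ∃ e, d = e + 2 := ⟨d - 2, by omega⟩
  set M := 2 * (e + 2 - 1) with hM
  have hMe : M = 2 * (e + 1) := by omega
  -- each term : M * α i ≤ n * (M * α i / n) + (n - 1)
  have h1 : ∀ i : Fin (e + 2), M * α i ≤ n * (M * α i / n) + (n - 1) := by
    intro i
    have hdm := Nat.div_add_mod (M * α i) n
    have hlt : (M * α i) % n < n := Nat.mod_lt _ (by omega)
    omega
  have hsum : M * n ≤ n * (∑ i, M * α i / n) + (e + 2) * (n - 1) := by
    calc M * n = ∑ i : Fin (e + 2), M * α i := by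
          rw [← Finset.mul_sum, ← degree_eq_sum_univ, hα]
      _ ≤ ∑ i : Fin (e + 2), (n * (M * α i / n) + (n - 1)) :=
          Finset.sum_le_sum (fun i _ => h1 i)
      _ = n * (∑ i, M * α i / n) + (e + 2) * (n - 1) := by
          rw [Finset.sum_add_distrib, Finset.mul_sum, Finset.sum_const, Finset.card_univ]
          simp [mul_comm]
  have hdeg : (floorMap n α).degree = ∑ i, M * α i / n := by
    rw [degree_eq_sum_univ]
    apply Finset.sum_congr rfl
    intro i _
    rw [floorMap, Finsupp.mapRange_apply]
  rw [hdeg]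
  set S := ∑ i : Fin (e+2), M * α i / n with hS
  by_contra hcon
  push_neg at hcon
  have hSle : S ≤ e := by omega
  have h2 : n * S ≤ n * e := Nat.mul_le_mul_left _ hSle
  have h6 : (n - 1) + 1 = n := by omega
  have EN : (e + 2) * n = (e + 2) * (n - 1) + (e + 2) := by
    conv_lhs => rw [← h6]
    ring
  have hM2 : M * n = 2 * (e + 1) * n := by rw [hMe]
  nlinarith [hsum, h2, EN, hM2]



lemma ceilMap_le {n : ℕ} (hn : 1 ≤ n) {ε α : Fin d →₀ ℕ} (hle : ε ≤ floorMap n α) :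
    ceilMap n ε ≤ α := by
  rw [Finsupp.le_def] at hle ⊢
  intro i
  have h1 : ε i ≤ 2 * (d - 1) * α i / n := by
    have := hle i
    rwa [floorMap, Finsupp.mapRange_apply] at this
  have h2 : ε i * n ≤ 2 * (d - 1) * α i := (Nat.le_div_iff_mul_le (by omega)).mp h1
  rw [ceilMap, Finsupp.mapRange_apply]
  rcases Nat.eq_zero_or_pos (2 * (d - 1)) with h | h
  · simp [h]
  · rw [Nat.div_le_iff_le_mul_add_pred h]
    omega

lemma degree_ceilMap_ge {n k : ℕ} (hd : 2 ≤ d) (hk : 2 * k ≤ n) {ε : Fin d →₀ ℕ}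
    (hε : ε.degree = d - 1) : k ≤ (ceilMap n ε).degree := by
  set M := 2 * (d - 1) with hM
  have hMpos : 0 < M := by omega
  have h1 : ∀ i : Fin d, ε i * n ≤ M * ((ceilMap n ε) i) := by
    intro i
    rw [ceilMap, Finsupp.mapRange_apply]
    simp only [← hM]
    have hdm := Nat.div_add_mod (ε i * n + M - 1) M
    have hlt : (ε i * n + M - 1) % M < M := Nat.mod_lt _ hMpos
    omega
  have hsum : (d - 1) * n ≤ M * (ceilMap n ε).degree := by
    calc (d - 1) * n = (∑ i, ε i) * n := by rw [← degree_eq_sum_univ, hε]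
      _ = ∑ i : Fin d, ε i * n := by rw [Finset.sum_mul]
      _ ≤ ∑ i : Fin d, M * ((ceilMap n ε) i) := Finset.sum_le_sum (fun i _ => h1 i)
      _ = M * (ceilMap n ε).degree := by rw [← Finset.mul_sum, ← degree_eq_sum_univ]
  have h2 : M * k ≤ M * (ceilMap n ε).degree := by
    calc M * k = (d - 1) * (2 * k) := by ring
      _ ≤ (d - 1) * n := Nat.mul_le_mul_left _ hk
      _ ≤ M * (ceilMap n ε).degree := hsum
  exact Nat.le_of_mul_le_mul_left h2 hMpos

lemma exists_cover (d n k : ℕ) (hd : 2 ≤ d) (hn : 1 ≤ n) (hk : 2 * k ≤ n) :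
    ∃ (δmap : (Fin d →₀ ℕ) → (Fin d →₀ ℕ)) (T : Finset (Fin d →₀ ℕ)),
      T.card ≤ Nat.choose (2 * d - 2) (d - 1) ∧
      (∀ δ ∈ T, δ.degree = k) ∧
      ∀ α, α.degree = n → δmap α ≤ α ∧ (δmap α).degree = k ∧ δmap α ∈ T := by
  classical
  set F : (Fin d →₀ ℕ) → (Fin d →₀ ℕ) := fun ε => trunc (ceilMap n ε) k with hF
  have hFdeg : ∀ ε : Fin d →₀ ℕ, ε.degree = d - 1 → (F ε).degree = k := by
    intro ε hε
    exact degree_trunc _ _ (degree_ceilMap_ge hd hk hε)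
  refine ⟨fun α => F (trunc (floorMap n α) (d - 1)),
    Finset.image (fun s : Sym (Fin d) (d - 1) => F (Multiset.toFinsupp (s : Multiset (Fin d))))
      Finset.univ, ?_, ?_, ?_⟩
  · calc _ ≤ (Finset.univ : Finset (Sym (Fin d) (d - 1))).card := Finset.card_image_le
      _ = Fintype.card (Sym (Fin d) (d - 1)) := Finset.card_univ
      _ = (Fintype.card (Fin d) + (d - 1) - 1).choose (d - 1) := Sym.card_sym_eq_choose _
      _ = Nat.choose (2 * d - 2) (d - 1) := by rw [Fintype.card_fin]; congr 1; omega
  · intro δ hδ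
    obtain ⟨s, _, rfl⟩ := Finset.mem_image.mp hδ
    apply hFdeg
    rw [degree_eq_card_toMultiset, Multiset.toFinsupp_toMultiset]
    exact s.2
  · intro α hα
    set ε := trunc (floorMap n α) (d - 1) with hε
    have hεdeg : ε.degree = d - 1 :=
      degree_trunc _ _ (degree_floorMap_ge hd hn α hα)
    have hεle : ε ≤ floorMap n α := trunc_le _ _
    have hule : ceilMap n ε ≤ α := ceilMap_le hn hεle
    refine ⟨le_trans (trunc_le _ _) hule, hFdeg ε hεdeg, ?_⟩
    apply Finset.mem_image.mpr
    refine ⟨⟨ε.toMultiset, ?_⟩, Finset.mem_univ _, ?_⟩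
    · rw [← degree_eq_card_toMultiset, hεdeg]
    · show F (Multiset.toFinsupp ε.toMultiset) = F ε
      rw [Finsupp.toMultiset_toFinsupp]


lemma degree_of_mem_support {p : MvP d} {n : ℕ} (hp : p.IsHomogeneous n)
    {α : Fin d →₀ ℕ} (hα : α ∈ p.support) : α.degree = n := by
  rw [Finsupp.degree_eq_weight_one]
  exact hp (MvPolynomial.mem_support_iff.mp hα)

lemma wpSet_bddBelow (d k l : ℕ) (p : MvP d) :
    BddBelow {x : ℝ | ∃ (m : ℕ) (f g : Fin m → MvP d),
      (∀ j, (f j).IsHomogeneous k) ∧ (∀ j, (g j).IsHomogeneous l) ∧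
      p = ∑ j, f j * g j ∧ x = ∑ j, norm2 (f j) * norm2 (g j)} := by
  refine ⟨0, fun y hy => ?_⟩
  obtain ⟨m, f, g, _, _, _, rfl⟩ := hy
  exact Finset.sum_nonneg fun j _ => mul_nonneg (norm2_nonneg _) (norm2_nonneg _)

lemma wpNorm_le {k l : ℕ} {p : MvP d} {x : ℝ}
    (hx : ∃ (m : ℕ) (f g : Fin m → MvP d),
      (∀ j, (f j).IsHomogeneous k) ∧ (∀ j, (g j).IsHomogeneous l) ∧
      p = ∑ j, f j * g j ∧ x = ∑ j, norm2 (f j) * norm2 (g j)) :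
    wpNorm d k l p ≤ x :=
  csInf_le (wpSet_bddBelow d k l p) hx

lemma wpNorm_comm (k l : ℕ) (p : MvP d) : wpNorm d k l p = wpNorm d l k p := by
  unfold wpNorm
  congr 1
  ext x
  constructor <;> rintro ⟨m, f, g, hf, hg, hp, hx⟩ <;>
    exact ⟨m, g, f, hg, hf,
      by rw [hp]; exact Finset.sum_congr rfl fun j _ => mul_comm _ _,
      by rw [hx]; exact Finset.sum_congr rfl fun j _ => mul_comm _ _⟩

lemma norm2_sum_monomial {ι : Type} (A : Finset ι) (φ : ι → (Fin d →₀ ℕ))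
    (hφ : Set.InjOn φ A) (c : ι → ℂ) :
    norm2 (∑ a ∈ A, MvPolynomial.monomial (φ a) (c a)) ^ 2 = ∑ a ∈ A, ‖c a‖ ^ 2 := by
  classical
  set q : MvP d := ∑ a ∈ A, MvPolynomial.monomial (φ a) (c a) with hq
  have hsupp : q.support ⊆ A.image φ := by
    refine Finset.Subset.trans MvPolynomial.support_sum ?_
    intro β hβ
    obtain ⟨a, ha, hmem⟩ := Finset.mem_biUnion.mp hβ
    have := MvPolynomial.support_monomial_subset hmem
    rw [Finset.mem_singleton] at this
    exact Finset.mem_image.mpr ⟨a, ha, this.symm⟩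
  rw [norm2_sq hsupp, Finset.sum_image (fun a ha b hb h => hφ ha hb h)]
  apply Finset.sum_congr rfl
  intro a ha
  congr 1
  rw [hq, MvPolynomial.coeff_sum]
  rw [Finset.sum_eq_single a]
  · rw [MvPolynomial.coeff_monomial, if_pos rfl]
  · intro b hb hne
    rw [MvPolynomial.coeff_monomial, if_neg (fun h => hne (hφ hb ha h))]
  · intro h; exact absurd ha h

lemma wpNorm_le_sqrt_card {k l n : ℕ} (hkl : k + l = n) {p : MvP d} (hp : p.IsHomogeneous n)
    (δmap : (Fin d →₀ ℕ) → (Fin d →₀ ℕ)) (T : Finset (Fin d →₀ ℕ))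
    (hTdeg : ∀ δ ∈ T, δ.degree = k)
    (hcov : ∀ α ∈ p.support, δmap α ≤ α ∧ δmap α ∈ T) :
    wpNorm d k l p ≤ Real.sqrt T.card * norm2 p := by
  classical
  set m := T.card with hm
  set e : Fin m ≃ T := (Fintype.equivFinOfCardEq (Fintype.card_coe T)) |>.symm with he
  set A : (Fin d →₀ ℕ) → Finset (Fin d →₀ ℕ) :=
    fun δ => p.support.filter (fun α => δmap α = δ) with hA
  set f : Fin m → MvP d := fun j => MvPolynomial.monomial ((e j : Fin d →₀ ℕ)) (1 : ℂ) with hf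
  set g : Fin m → MvP d :=
    fun j => ∑ α ∈ A (e j), MvPolynomial.monomial (α - δmap α) (p.coeff α) with hg
  have hAmem : ∀ δ : Fin d →₀ ℕ, ∀ α ∈ A δ, α ∈ p.support ∧ δmap α = δ := by
    intro δ α hα
    exact ⟨(Finset.mem_filter.mp hα).1, (Finset.mem_filter.mp hα).2⟩
  have hfhom : ∀ j, (f j).IsHomogeneous k :=
    fun j => MvPolynomial.isHomogeneous_monomial _ (hTdeg _ (e j).2)
  have hghom : ∀ j, (g j).IsHomogeneous l := by
    intro j
    apply MvPolynomial.IsHomogeneous.sum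
    intro α hα
    obtain ⟨hαs, hδ⟩ := hAmem _ α hα
    obtain ⟨hle, _⟩ := hcov α hαs
    apply MvPolynomial.isHomogeneous_monomial
    have h1 : δmap α + (α - δmap α) = α := add_tsub_cancel_of_le hle
    have h2 : (δmap α).degree + (α - δmap α).degree = n := by
      rw [← degree_add, h1, degree_of_mem_support hp hαs]
    have h3 : (δmap α).degree = k := hTdeg _ (hδ ▸ (hcov α hαs).2)
    omega
  have hprod : ∀ j, f j * g j = ∑ α ∈ A (e j), MvPolynomial.monomial α (p.coeff α) := by
    intro j
    rw [hf, hg, Finset.mul_sum]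
    apply Finset.sum_congr rfl
    intro α hα
    obtain ⟨hαs, hδ⟩ := hAmem _ α hα
    obtain ⟨hle, _⟩ := hcov α hαs
    rw [MvPolynomial.monomial_mul, one_mul, ← hδ, add_tsub_cancel_of_le hle]
  have hreindex : ∀ (F : (Fin d →₀ ℕ) → ℝ), ∑ j : Fin m, F (e j) = ∑ δ ∈ T, F δ := by
    intro F
    rw [Equiv.sum_comp e (fun t : T => F t), ← Finset.sum_coe_sort T F]
  have hreindexP : ∀ (F : (Fin d →₀ ℕ) → MvP d), ∑ j : Fin m, F (e j) = ∑ δ ∈ T, F δ := by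
    intro F
    rw [Equiv.sum_comp e (fun t : T => F t), ← Finset.sum_coe_sort T F]
  have hdecomp : p = ∑ j, f j * g j := by
    calc p = ∑ α ∈ p.support, MvPolynomial.monomial α (p.coeff α) := (MvPolynomial.as_sum p)
      _ = ∑ δ ∈ T, ∑ α ∈ A δ, MvPolynomial.monomial α (p.coeff α) :=
          (Finset.sum_fiberwise_of_maps_to (fun α hα => (hcov α hα).2) _).symm
      _ = ∑ j, f j * g j := by
          rw [← hreindexP (fun δ => ∑ α ∈ A δ, MvPolynomial.monomial α (p.coeff α))]
          exact Finset.sum_congr rfl fun j _ => (hprod j).symm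
  set s : (Fin d →₀ ℕ) → ℝ := fun δ => ∑ α ∈ A δ, ‖p.coeff α‖ ^ 2 with hs
  have hsnonneg : ∀ δ, 0 ≤ s δ := fun δ => Finset.sum_nonneg fun α _ => by positivity
  have hgnorm : ∀ j, norm2 (g j) = Real.sqrt (s (e j)) := by
    intro j
    have hinj : Set.InjOn (fun α => α - δmap α) (A (e j)) := by
      intro a ha b hb h
      obtain ⟨has, haδ⟩ := hAmem _ a ha
      obtain ⟨hbs, hbδ⟩ := hAmem _ b hb
      have h1 : δmap a + (a - δmap a) = a := add_tsub_cancel_of_le (hcov a has).1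
      have h2 : δmap b + (b - δmap b) = b := add_tsub_cancel_of_le (hcov b hbs).1
      simp only at h
      rw [← h1, ← h2, h, haδ, hbδ]
    have hval := norm2_sum_monomial (A (e j)) (fun α => α - δmap α) hinj (fun α => p.coeff α)
    have : norm2 (g j) ^ 2 = s (e j) := by rw [hg]; exact hval
    rw [← Real.sqrt_sq (norm2_nonneg (g j)), this]
  have hcost : ∑ j, norm2 (f j) * norm2 (g j) ≤ Real.sqrt T.card * norm2 p := by
    have h1 : ∀ j, norm2 (f j) = 1 := by
      intro j; rw [hf]; simp [norm2_monomial]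
    have h2 : ∑ j, norm2 (f j) * norm2 (g j) = ∑ j : Fin m, Real.sqrt (s (e j)) := by
      apply Finset.sum_congr rfl
      intro j _; rw [h1 j, one_mul, hgnorm j]
    rw [h2, hreindex (fun δ => Real.sqrt (s δ))]
    have hcs : (∑ δ ∈ T, Real.sqrt (s δ)) ^ 2 ≤ (T.card : ℝ) * ∑ δ ∈ T, s δ := by
      have := sq_sum_le_card_mul_sum_sq (s := T) (f := fun δ => Real.sqrt (s δ))
      simpa [Real.sq_sqrt (hsnonneg _)] using this
    have hsum : ∑ δ ∈ T, s δ = norm2 p ^ 2 := by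
      rw [norm2_sq (Finset.Subset.refl _), hs]
      exact Finset.sum_fiberwise_of_maps_to (fun α hα => (hcov α hα).2) _
    have hnn : 0 ≤ ∑ δ ∈ T, Real.sqrt (s δ) :=
      Finset.sum_nonneg fun δ _ => Real.sqrt_nonneg _
    calc ∑ δ ∈ T, Real.sqrt (s δ)
        = Real.sqrt ((∑ δ ∈ T, Real.sqrt (s δ)) ^ 2) := (Real.sqrt_sq hnn).symm
      _ ≤ Real.sqrt ((T.card : ℝ) * (norm2 p ^ 2)) := by
          apply Real.sqrt_le_sqrt; rw [← hsum]; exact hcs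
      _ = Real.sqrt T.card * norm2 p := by
          rw [Real.sqrt_mul (Nat.cast_nonneg _), Real.sqrt_sq (norm2_nonneg p)]
  exact le_trans (wpNorm_le ⟨m, f, g, hfhom, hghom, hdecomp, rfl⟩) hcost


-- NEW MATERIAL
lemma eq_C_of_isHomogeneous_zero {f : MvP d} (hf : f.IsHomogeneous 0) :
    f = MvPolynomial.C (f.coeff 0) := by
  apply MvPolynomial.ext
  intro m
  rw [MvPolynomial.coeff_C]
  by_cases hm : m = 0
  · subst hm; rw [if_pos rfl]
  · rw [if_neg (fun h => hm h.symm)]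
    by_contra hc
    have : m.degree = 0 := degree_of_mem_support hf (MvPolynomial.mem_support_iff.mpr hc)
    exact hm ((Finsupp.degree_eq_zero_iff m).mp this)

lemma norm2_le_wpNorm0 {n : ℕ} (p : MvP d) (hp : p.IsHomogeneous n) :
    norm2 p ≤ wpNorm d 0 n p := by
  apply le_csInf
  · exact ⟨∑ j : Fin 1, norm2 ((fun _ => MvPolynomial.C (1:ℂ)) j) * norm2 ((fun _ => p) j),
      1, fun _ => MvPolynomial.C 1, fun _ => p,
      fun _ => MvPolynomial.isHomogeneous_C _ _, fun _ => hp,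
      by simp, rfl⟩
  · rintro b ⟨m, f, g, hf, hg, hpeq, rfl⟩
    calc norm2 p = norm2 (∑ j, f j * g j) := by rw [← hpeq]
      _ ≤ ∑ j, norm2 (f j * g j) := norm2_sum_le _
      _ = ∑ j, norm2 (f j) * norm2 (g j) := by
          apply Finset.sum_congr rfl
          intro j _
          have hC : f j = MvPolynomial.C ((f j).coeff 0) := eq_C_of_isHomogeneous_zero (hf j)
          rw [hC, norm2_C_mul]
          congr 1
          rw [MvPolynomial.C_apply, norm2_monomial]

lemma one_le_sqrtC (d : ℕ) : 1 ≤ Real.sqrt (Nat.choose (2 * d - 2) (d - 1)) := by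
  rw [show (1:ℝ) = Real.sqrt 1 by rw [Real.sqrt_one]]
  apply Real.sqrt_le_sqrt
  have : 0 < Nat.choose (2 * d - 2) (d - 1) := Nat.choose_pos (by omega)
  exact_mod_cast this

lemma wpNorm_le_norm2_of_zero_left {n : ℕ} (p : MvP d) (hp : p.IsHomogeneous n) :
    wpNorm d 0 n p ≤ norm2 p := by
  have h := wpNorm_le (k := 0) (l := n) (p := p)
    ⟨1, fun _ => MvPolynomial.C 1, fun _ => p,
      fun _ => MvPolynomial.isHomogeneous_C _ _, fun _ => hp, by simp, rfl⟩
  calc wpNorm d 0 n p ≤ ∑ _j : Fin 1, norm2 (MvPolynomial.C (1:ℂ)) * norm2 p := h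
    _ = norm2 p := by
        rw [MvPolynomial.C_apply, norm2_monomial]
        simp

lemma supp_card_le_one_of_d1 {n : ℕ} (p : MvP 1) (hp : p.IsHomogeneous n) :
    ∀ a ∈ p.support, ∀ b ∈ p.support, a = b := by
  intro a ha b hb
  have hda : a.degree = n := degree_of_mem_support hp ha
  have hdb : b.degree = n := degree_of_mem_support hp hb
  rw [degree_eq_sum_univ, Fin.sum_univ_one] at hda hdb
  apply Finsupp.ext
  intro i
  have hi : i = 0 := Subsingleton.elim _ _
  rw [hi, hda, hdb]

lemma wp_upper (hd : 1 ≤ d) {n k : ℕ} (hk : k ≤ n) (p : MvP d) (hp : p.IsHomogeneous n) :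
    wpNorm d k (n - k) p ≤ Real.sqrt (Nat.choose (2 * d - 2) (d - 1)) * norm2 p := by
  classical
  set Cd := Nat.choose (2 * d - 2) (d - 1) with hCd
  have hfin : ∀ (T : Finset (Fin d →₀ ℕ)), T.card ≤ Cd →
      Real.sqrt T.card * norm2 p ≤ Real.sqrt Cd * norm2 p := by
    intro T hT
    exact mul_le_mul_of_nonneg_right
      (Real.sqrt_le_sqrt (by exact_mod_cast hT)) (norm2_nonneg p)
  -- trivial-side cases
  by_cases hk0 : k = 0
  · subst hk0
    rw [Nat.sub_zero]
    calc wpNorm d 0 n p ≤ norm2 p := wpNorm_le_norm2_of_zero_left p hp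
      _ ≤ _ := le_mul_of_one_le_left (norm2_nonneg p) (one_le_sqrtC d)
  by_cases hkn : k = n
  · rw [hkn]
    have h := wpNorm_le (k := n) (l := n - n) (p := p)
      ⟨1, fun _ => p, fun _ => MvPolynomial.C 1,
        fun _ => hp, fun _ => by rw [Nat.sub_self]; exact MvPolynomial.isHomogeneous_C _ _,
        by simp, rfl⟩
    have h2 : (∑ _j : Fin 1, norm2 p * norm2 (MvPolynomial.C (1:ℂ) : MvP d)) = norm2 p := by
      rw [MvPolynomial.C_apply, norm2_monomial]; simp
    rw [h2] at h

    exact le_trans h (le_mul_of_one_le_left (norm2_nonneg p) (one_le_sqrtC d))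
  -- now 1 ≤ k ≤ n - 1, n ≥ 1
  have hn1 : 1 ≤ n := by omega
  by_cases hd1 : d = 1
  · subst hd1
    set T : Finset (Fin 1 →₀ ℕ) := p.support.image (fun α => trunc α k) with hT
    have hcard : T.card ≤ Cd := by
      have h1 : T.card ≤ p.support.card := Finset.card_image_le
      have h2 : p.support.card ≤ 1 :=
        Finset.card_le_one.mpr (fun a ha b hb =>
          supp_card_le_one_of_d1 p hp a ha b hb)
      have : Cd = 1 := by rw [hCd]; norm_num
      omega
    refine le_trans (wpNorm_le_sqrt_card (by omega) hp (fun α => trunc α k) T ?_ ?_)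
      (hfin T hcard)
    · intro δ hδ
      obtain ⟨α, hα, rfl⟩ := Finset.mem_image.mp hδ
      exact degree_trunc α k (by rw [degree_of_mem_support hp hα]; omega)
    · intro α hα
      exact ⟨trunc_le α k, Finset.mem_image.mpr ⟨α, hα, rfl⟩⟩
  · have hd2 : 2 ≤ d := by omega
    by_cases h2k : 2 * k ≤ n
    · obtain ⟨δmap, T, hcard, hTdeg, hcov⟩ := exists_cover d n k hd2 hn1 h2k
      refine le_trans (wpNorm_le_sqrt_card (by omega) hp δmap T hTdeg ?_) (hfin T hcard)
      intro α hα
      obtain ⟨hle, _, hmem⟩ := hcov α (degree_of_mem_support hp hα)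
      exact ⟨hle, hmem⟩
    · set l := n - k with hl
      have h2l : 2 * l ≤ n := by omega
      obtain ⟨δmap, T, hcard, hTdeg, hcov⟩ := exists_cover d n l hd2 hn1 h2l
      rw [wpNorm_comm]
      have hlk : l + k = n := by omega
      refine le_trans (wpNorm_le_sqrt_card hlk hp δmap T hTdeg ?_) (hfin T hcard)
      intro α hα
      obtain ⟨hle, _, hmem⟩ := hcov α (degree_of_mem_support hp hα)
      exact ⟨hle, hmem⟩


/-- Theorem 1.5 / Theorem 6.1 (first part): `|||·|||₁` is equivalent to the Hardy
norm, with constant `C_d ≤ binom(2d-2, d-1)`. -/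
theorem norm2_le_triple1_le_sqrt_Cd_norm2 (d : ℕ) (hd : 1 ≤ d) :
    ∃ C : ℝ, 0 ≤ C ∧ C ≤ (Nat.choose (2 * d - 2) (d - 1) : ℝ) ∧
      ∀ (n : ℕ) (p : MvP d), p.IsHomogeneous n →
        norm2 p ≤ triple1 d n p ∧ triple1 d n p ≤ Real.sqrt C * norm2 p := by
  refine ⟨(Nat.choose (2 * d - 2) (d - 1) : ℝ), by positivity, le_refl _, ?_⟩
  intro n p hp
  constructor
  · have h0 : norm2 p ≤ wpNorm d ((0 : Fin (n+1)) : ℕ) (n - ((0 : Fin (n+1)) : ℕ)) p := by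
      simpa using norm2_le_wpNorm0 p hp
    unfold triple1
    exact le_trans h0 (le_ciSup (f := fun k : Fin (n+1) => wpNorm d (k : ℕ) (n - (k : ℕ)) p)
      (Finite.bddAbove_range _) (0 : Fin (n+1)))
  · unfold triple1
    apply ciSup_le
    intro k
    exact wp_upper hd (Nat.lt_succ_iff.mp k.isLt) p hp


end WP
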